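/- Let p be prime and η: tuples of positive integers → k (k a field of characteristic p) be 'structural constants' satisfying the shuffle identities: η(a₁) = 1 and for 0 ≤ s₁ ≤ s < p, η(a₁,…,a_{s₁})·η(a_{s₁+1},…,a_s) = Σ_{π ∈ I_{s₁s}} η(a_{π(1)},…,a_{π(s)}), where I_{s₁s} is the set of shuffles of {1,…,s₁} into {s₁+1,…,s}. For 1 ≤ s₁ ≤ s < p let Φ_{s s₁} be the set of permutations π of {1,…,s} with π(1) = s₁ such that for every l, {π(1),…,π(l)} is a set of consecutive integers, and set B_{s₁}(1,…,s) = Σ_{π∈Φ_{s s₁}} η(π(1),…,π(s)), with B₀ = B_{s+1} = 0. Then B_{s₁}(1,…,s) + B_{s₁+1}(1,…,s) = η(s₁, s₁−1,…,1)·η(s₁+1,…,s). -/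

import Mathlib

open scoped Classical

/-- The list of all shuffles (interleavings) of two lists. -/
def shuffles {α : Type*} : List α → List α → List (List α)
  | [], l₂ => [l₂]
  | l₁, [] => [l₁]
  | a :: l₁, b :: l₂ =>
      ((shuffles l₁ (b :: l₂)).map (a :: ·)) ++ ((shuffles (a :: l₁) l₂).map (b :: ·))

/-- A permutation `π` of `{1,…,s}` is connected if for every `l`, the image set
`{π(1),…,π(l)}` is a set of consecutive integers. -/
def IsConnectedPerm {s : ℕ} (π : Equiv.Perm (Fin s)) : Prop :=
  ∀ l : Fin s, ∃ c : ℕ,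
    (Finset.univ.filter fun i : Fin s => i ≤ l).image (fun i => (π i : ℕ)) =
      Finset.Ico c (c + (l : ℕ) + 1)

theorem shuffles_nil_left {α : Type*} (l : List α) : shuffles [] l = [l] := by
  cases l <;> simp [shuffles]

theorem shuffles_nil_right {α : Type*} (l : List α) : shuffles l [] = [l] := by
  cases l <;> simp [shuffles]

theorem cons_mem_shuffles_left {α : Type*} {L l₁ l₂ : List α} (a : α)
    (h : L ∈ shuffles l₁ l₂) : (a :: L) ∈ shuffles (a :: l₁) l₂ := by
  cases l₂ with
  | nil => simp_all [shuffles_nil_right]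
  | cons b l₂ =>
    rw [shuffles]
    exact List.mem_append_left _ (List.mem_map_of_mem h)

theorem cons_mem_shuffles_right {α : Type*} {L l₁ l₂ : List α} (b : α)
    (h : L ∈ shuffles l₁ l₂) : (b :: L) ∈ shuffles l₁ (b :: l₂) := by
  cases l₁ with
  | nil => simp_all [shuffles_nil_left]
  | cons a l₁ =>
    rw [shuffles]
    exact List.mem_append_right _ (List.mem_map_of_mem h)

/-- membership in shuffles from complementary filters -/
theorem mem_shuffles_of_filter {α : Type*} (q : α → Bool) :
    ∀ {L l₁ l₂ : List α}, L.filter q = l₁ → L.filter (fun x => !(q x)) = l₂ →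
      L ∈ shuffles l₁ l₂
  | [], l₁, l₂, h₁, h₂ => by
    simp only [List.filter_nil] at h₁ h₂; subst h₁; subst h₂
    simp [shuffles_nil_left]
  | x :: T, l₁, l₂, h₁, h₂ => by
    by_cases hx : q x
    · rw [List.filter_cons_of_pos hx] at h₁
      rw [List.filter_cons_of_neg (by simp [hx])] at h₂
      subst h₁
      exact cons_mem_shuffles_left x (mem_shuffles_of_filter q rfl h₂)
    · rw [List.filter_cons_of_neg (by simp [hx])] at h₁
      rw [List.filter_cons_of_pos (by simp [hx])] at h₂
      subst h₂
      exact cons_mem_shuffles_right x (mem_shuffles_of_filter q h₁ rfl)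

/-- filters of a member of shuffles -/
theorem filter_of_mem_shuffles {α : Type*} (q : α → Bool) :
    ∀ {l₁ l₂ L : List α}, L ∈ shuffles l₁ l₂ → (∀ x ∈ l₁, q x) → (∀ x ∈ l₂, ¬ (q x = true)) →
      L.filter q = l₁ ∧ L.filter (fun x => !(q x)) = l₂
  | [], l₂, L, h, h₁, h₂ => by
    rw [shuffles_nil_left, List.mem_singleton] at h; subst h
    constructor
    · exact List.filter_eq_nil_iff.2 (by simpa using h₂)
    · exact List.filter_eq_self.2 (by simpa using h₂)
  | a :: l₁, [], L, h, h₁, h₂ => by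
    rw [shuffles_nil_right, List.mem_singleton] at h; subst h
    constructor
    · exact List.filter_eq_self.2 h₁
    · exact List.filter_eq_nil_iff.2 (by simpa using h₁)
  | a :: l₁, b :: l₂, L, h, h₁, h₂ => by
    rw [shuffles, List.mem_append] at h
    rcases h with h | h <;> rw [List.mem_map] at h <;> obtain ⟨M, hM, rfl⟩ := h
    · have ha : q a := h₁ a (by simp)
      have := filter_of_mem_shuffles q hM (fun x hx => h₁ x (by simp [hx])) h₂
      rw [List.filter_cons_of_pos ha, List.filter_cons_of_neg (by simp [ha])]
      exact ⟨by rw [this.1], this.2⟩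
    · have hb : ¬ (q b = true) := h₂ b (by simp)
      have := filter_of_mem_shuffles q hM h₁ (fun x hx => h₂ x (by simp [hx]))
      rw [List.filter_cons_of_neg hb, List.filter_cons_of_pos (by simp [hb])]
      exact ⟨this.1, by rw [this.2]⟩

theorem head?_mem_shuffles {α : Type*} : ∀ {l₁ l₂ L : List α}, L ∈ shuffles l₁ l₂ →
    L.head? = l₁.head? ∨ L.head? = l₂.head?
  | [], l₂, L, h => by rw [shuffles_nil_left, List.mem_singleton] at h; subst h; right; rfl
  | a :: l₁, [], L, h => by rw [shuffles_nil_right, List.mem_singleton] at h; subst h; left; rfl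
  | a :: l₁, b :: l₂, L, h => by
    rw [shuffles, List.mem_append] at h
    rcases h with h | h <;> rw [List.mem_map] at h <;> obtain ⟨M, hM, rfl⟩ := h
    · left; rfl
    · right; rfl

theorem nodup_shuffles {α : Type*} : ∀ {l₁ l₂ : List α}, (l₁ ++ l₂).Nodup →
    (shuffles l₁ l₂).Nodup
  | [], l₂, h => by rw [shuffles_nil_left]; exact List.nodup_singleton _
  | a :: l₁, [], h => by rw [shuffles_nil_right]; exact List.nodup_singleton _
  | a :: l₁, b :: l₂, h => by
    rw [shuffles]
    have hab : a ≠ b := by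
      simp only [List.cons_append, List.nodup_cons, List.mem_append] at h
      exact fun e => h.1 (Or.inr (e ▸ (List.mem_cons_self (a := b) (l := l₂))))
    refine List.Nodup.append ?_ ?_ ?_
    · exact (nodup_shuffles (by
        simp only [List.cons_append, List.nodup_cons] at h ⊢
        exact h.2)).map (fun x y e => by injection e)
    · refine (nodup_shuffles ?_).map (fun x y e => by injection e)
      exact List.Nodup.sublist ((List.sublist_cons_self b l₂).append_left _) h
    · intro X hX hX'
      rw [List.mem_map] at hX hX'
      obtain ⟨M, _, rfl⟩ := hX; obtain ⟨N, _, e⟩ := hX'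
      injection e with e1 e2; exact hab e1.symm

theorem shuffles_map {α β : Type*} (f : α → β) : ∀ (l₁ l₂ : List α),
    shuffles (l₁.map f) (l₂.map f) = (shuffles l₁ l₂).map (List.map f)
  | [], l₂ => by simp [shuffles_nil_left]
  | a :: l₁, [] => by simp [shuffles_nil_right]
  | a :: l₁, b :: l₂ => by
    rw [List.map_cons, List.map_cons, shuffles, shuffles,
      ← List.map_cons (f := f) (a := b) (l := l₂), ← List.map_cons (f := f) (a := a) (l := l₁),
      shuffles_map f l₁ (b :: l₂), shuffles_map f (a :: l₁) l₂]
    simp [List.map_map, Function.comp_def]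
theorem toFinset_take_revrange {s₁ i : ℕ} (hi : i ≤ s₁) :
    (((List.range s₁).reverse).take i).toFinset = Finset.Ico (s₁ - i) s₁ := by
  ext x
  rw [List.mem_toFinset, List.mem_take_iff_getElem, Finset.mem_Ico]
  simp only [List.length_reverse, List.length_range]
  constructor
  · rintro ⟨k, hk, rfl⟩
    rw [List.getElem_reverse, List.getElem_range]
    simp only [List.length_range]
    omega
  · rintro ⟨h1, h2⟩
    refine ⟨s₁ - 1 - x, by omega, ?_⟩
    rw [List.getElem_reverse, List.getElem_range]
    simp only [List.length_range]
    omega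

theorem toFinset_take_range' {b n j : ℕ} (hj : j ≤ n) :
    ((List.range' b n).take j).toFinset = Finset.Ico b (b + j) := by
  ext x
  rw [List.mem_toFinset, List.mem_take_iff_getElem, Finset.mem_Ico]
  simp only [List.length_range']
  constructor
  · rintro ⟨k, hk, rfl⟩
    rw [List.getElem_range']
    omega
  · rintro ⟨h1, h2⟩
    exact ⟨x - b, by omega, by rw [List.getElem_range']; omega⟩
theorem perm_toFinset {l₁ l₂ : List ℕ} (h : l₁.Perm l₂) : l₁.toFinset = l₂.toFinset := by
  ext x; simp [h.mem_iff]

theorem perm_of_mem_shuffles {α : Type*} : ∀ {l₁ l₂ L : List α},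
    L ∈ shuffles l₁ l₂ → L.Perm (l₁ ++ l₂)
  | [], l₂, L, h => by simp_all [shuffles_nil_left]
  | a :: l₁, [], L, h => by simp_all [shuffles_nil_right]
  | a :: l₁, b :: l₂, L, h => by
    rw [shuffles, List.mem_append] at h
    rcases h with h | h <;> rw [List.mem_map] at h <;> obtain ⟨M, hM, rfl⟩ := h
    · exact (perm_of_mem_shuffles hM).cons a
    · refine ((perm_of_mem_shuffles hM).cons b).trans ?_
      simp only [← List.cons_append]
      exact List.perm_middle.symm

theorem dirA (s s₁ : ℕ) (hs₁ : 1 ≤ s₁) (hs₁s : s₁ ≤ s) (L : List ℕ)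
    (hlen : L.length = s) (hnd : L.Nodup)
    (hfull : L.toFinset = Finset.Ico 0 s)
    (hconn : ∀ l, l < s → ∃ c, (L.take (l + 1)).toFinset = Finset.Ico c (c + l + 1))
    (hhead : L.head? = some (s₁ - 1) ∨ L.head? = some s₁) :
    L ∈ shuffles ((List.range s₁).reverse) (List.range' s₁ (s - s₁)) := by
  have hs0 : 0 < s := lt_of_lt_of_le hs₁ hs₁s
  have key : ∀ l, l < s → ∃ c, c ≤ s₁ ∧ s₁ ≤ c + l + 1 ∧
      (L.take (l + 1)).toFinset = Finset.Ico c (c + l + 1) ∧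
      (L.take (l + 1)).filter (fun x => decide (x < s₁)) = (List.range' c (s₁ - c)).reverse ∧
      (L.take (l + 1)).filter (fun x => !decide (x < s₁)) = List.range' s₁ (c + l + 1 - s₁) := by
    intro l
    induction l with
    | zero =>
      intro _
      have h0 : 0 < L.length := by omega
      have htake : L.take 1 = [L[0]] := by
        rw [List.take_succ, List.take_zero, List.getElem?_eq_getElem h0]
        rfl
      have hhead' : L[0] = s₁ - 1 ∨ L[0] = s₁ := by
        rw [List.head?_eq_getElem?, List.getElem?_eq_getElem h0] at hhead
        rcases hhead with h | h <;> [left; right] <;> exact Option.some_injective _ h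
      rcases hhead' with h | h
      · refine ⟨s₁ - 1, by omega, by omega, ?_, ?_, ?_⟩
        · rw [htake, h]; ext x; simp <;> omega
        · rw [htake, h, List.filter_cons, List.filter_nil]
          have : s₁ - (s₁ - 1) = 1 := by omega
          rw [this, List.range'_one]
          simp <;> omega
        · rw [htake, h, List.filter_cons, List.filter_nil]
          have : s₁ - 1 + 0 + 1 - s₁ = 0 := by omega
          rw [this]
          simp <;> omega
      · refine ⟨s₁, le_refl _, by omega, ?_, ?_, ?_⟩
        · rw [htake, h]; ext x; simp <;> omega
        · rw [htake, h, List.filter_cons, List.filter_nil]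
          simp
        · rw [htake, h, List.filter_cons, List.filter_nil]
          have : s₁ + 0 + 1 - s₁ = 1 := by omega
          rw [this, List.range'_one]
          simp
    | succ l ih =>
      intro hl1
      obtain ⟨c, hc1, hc2, hc3, hc4, hc5⟩ := ih (by omega)
      have hl1' : l + 1 < L.length := by omega
      set v := L[l + 1] with hv
      have htake : L.take (l + 2) = L.take (l + 1) ++ [v] := by
        rw [List.take_succ, List.getElem?_eq_getElem hl1']
        rfl
      have hndt : (L.take (l + 2)).Nodup := hnd.sublist (List.take_sublist _ _)
      have hvnot : v ∉ L.take (l + 1) := by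
        rw [htake, List.nodup_append] at hndt
        intro hmem
        exact hndt.2.2 v hmem v (List.mem_singleton.2 rfl) rfl
      have hnewset : (L.take (l + 2)).toFinset = (L.take (l + 1)).toFinset ∪ {v} := by
        rw [htake, List.toFinset_append]
        congr 1
      obtain ⟨c', hc'⟩ := hconn (l + 1) hl1
      have heq : Finset.Ico c' (c' + (l + 1) + 1) = Finset.Ico c (c + l + 1) ∪ {v} := by
        rw [← hc', hnewset, hc3]
      have hvnotIco : v ∉ Finset.Ico c (c + l + 1) := by
        rw [← hc3]; simpa using hvnot
      -- derive the two cases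
      have hA1 : c' ≤ c ∧ c < c' + l + 2 := by
        have : c ∈ Finset.Ico c' (c' + (l + 1) + 1) := by
          rw [heq]; simp <;> omega
        simp at this; omega
      have hA2 : (c ≤ c' ∧ c' < c + l + 1) ∨ c' = v := by
        have : c' ∈ Finset.Ico c (c + l + 1) ∪ {v} := by
          rw [← heq]; simp <;> omega
        simp at this; omega
      have hA3 : c' ≤ v ∧ v < c' + l + 2 := by
        have : v ∈ Finset.Ico c' (c' + (l + 1) + 1) := by
          rw [heq]; simp
        simp at this; omega
      have hA4 : ¬(c ≤ v ∧ v < c + l + 1) := by simpa using hvnotIco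
      have hA5 : c + l < c' + l + 2 := by
        have : c + l ∈ Finset.Ico c' (c' + (l + 1) + 1) := by
          rw [heq]; simp <;> omega
        simp at this; omega
      have hcases : (c' = c ∧ v = c + l + 1) ∨ (c' = c - 1 ∧ v = c - 1 ∧ 1 ≤ c) := by omega
      rcases hcases with ⟨hcc, hv'⟩ | ⟨hcc, hv', hc0⟩
      · -- extend on the right
        rw [hcc] at hc'
        refine ⟨c, hc1, by omega, hc', ?_, ?_⟩
        · rw [htake, List.filter_append, hc4, List.filter_cons, List.filter_nil]
          have h1 : ¬ (v < s₁) := by omega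
          simp [h1]
        · rw [htake, List.filter_append, hc5, List.filter_cons, List.filter_nil]
          have h1 : ¬ (v < s₁) := by omega
          have h2 : c + (l + 1) + 1 - s₁ = (c + l + 1 - s₁) + 1 := by omega
          rw [h2, List.range'_1_concat]
          have h3 : s₁ + (c + l + 1 - s₁) = v := by omega
          simp [h1, h3]
      · -- extend on the left
        rw [hcc] at hc'
        refine ⟨c - 1, by omega, by omega, hc', ?_, ?_⟩
        · rw [htake, List.filter_append, hc4, List.filter_cons, List.filter_nil]
          have h1 : v < s₁ := by omega
          have h2 : s₁ - (c - 1) = (s₁ - c) + 1 := by omega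
          rw [h2, List.range'_succ]
          have h3 : c - 1 + 1 = c := by omega
          rw [h3]
          simp [h1, hv']
          omega
        · rw [htake, List.filter_append, hc5, List.filter_cons, List.filter_nil]
          have h1 : v < s₁ := by omega
          have h2 : c - 1 + (l + 1) + 1 - s₁ = c + l + 1 - s₁ := by omega
          simp [h1, h2]
  obtain ⟨c, hc1, hc2, hc3, hc4, hc5⟩ := key (s - 1) (by omega)
  have hts : s - 1 + 1 = s := by omega
  rw [hts] at hc3 hc4 hc5
  have htL : L.take s = L := by rw [← hlen, List.take_length]
  rw [htL] at hc3 hc4 hc5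
  have hc0 : c = 0 := by
    have : (0 : ℕ) ∈ Finset.Ico c (c + (s - 1) + 1) := by
      rw [← hc3, hfull]; simp <;> omega
    simp at this; omega
  subst hc0
  have h4 : L.filter (fun x => decide (x < s₁)) = (List.range s₁).reverse := by
    rw [hc4]; simp [List.range_eq_range']
  have h5 : L.filter (fun x => !decide (x < s₁)) = List.range' s₁ (s - s₁) := by
    rw [hc5]
    congr 1
    omega
  exact mem_shuffles_of_filter _ h4 h5

theorem dirB (s s₁ : ℕ) (hs₁ : 1 ≤ s₁) (hs₁s : s₁ ≤ s) (L : List ℕ)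
    (hL : L ∈ shuffles ((List.range s₁).reverse) (List.range' s₁ (s - s₁))) :
    L.Perm (List.range s) ∧ (L.head? = some (s₁ - 1) ∨ L.head? = some s₁) ∧
    (∀ l, l < s → ∃ c, (L.take (l + 1)).toFinset = Finset.Ico c (c + l + 1)) := by
  have hperm : L.Perm (List.range s) := by
    refine (perm_of_mem_shuffles hL).trans ?_
    refine (List.Perm.append ((List.range s₁).reverse_perm) (List.Perm.refl _)).trans ?_
    rw [List.range_eq_range', List.range_eq_range']
    have := List.range'_append (s := 0) (m := s₁) (n := s - s₁) (step := 1)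
    simp only [one_mul, zero_add] at this
    rw [this, show s₁ + (s - s₁) = s from by omega]
  have hlen : L.length = s := by
    have := hperm.length_eq
    simpa using this
  refine ⟨hperm, ?_, ?_⟩
  · -- head
    rcases head?_mem_shuffles hL with h | h
    · left
      rw [h]
      obtain ⟨m, rfl⟩ : ∃ m, s₁ = m + 1 := ⟨s₁ - 1, by omega⟩
      rw [List.range_succ, List.reverse_append]
      simp
    · rcases Nat.eq_zero_or_pos (s - s₁) with h0 | h0
      · exfalso
        rw [h0] at h
        simp only [List.range'_zero, List.head?_nil, List.head?_eq_none_iff] at h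
        rw [h] at hlen
        simp at hlen
        omega
      · right
        rw [h]
        obtain ⟨m, hm⟩ : ∃ m, s - s₁ = m + 1 := ⟨s - s₁ - 1, by omega⟩
        rw [hm, List.range'_succ]
        simp
  · -- connectivity
    intro l hl
    have hfilt := filter_of_mem_shuffles (fun x => decide (x < s₁)) hL
      (by intro x hx; simp at hx ⊢; omega)
      (by intro x hx; rw [List.mem_range'_1] at hx; simp; omega)
    set P := L.take (l + 1) with hP
    have hpre1 : P.filter (fun x => decide (x < s₁)) <+: (List.range s₁).reverse := by
      rw [← hfilt.1]; exact (List.take_prefix _ _).filter _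
    have hpre2 : P.filter (fun x => !decide (x < s₁)) <+: List.range' s₁ (s - s₁) := by
      rw [← hfilt.2]; exact (List.take_prefix _ _).filter _
    set i := (P.filter (fun x => decide (x < s₁))).length with hi
    set j := (P.filter (fun x => !decide (x < s₁))).length with hj
    have hij : i + j = l + 1 := by
      have := (List.filter_append_perm (fun x => decide (x < s₁)) P).length_eq
      rw [List.length_append] at this
      rw [hi, hj, this, hP, List.length_take, hlen]
      omega
    have hi1 : i ≤ s₁ := by
      have := hpre1.length_le
      simpa using this
    have hj1 : j ≤ s - s₁ := by
      have := hpre2.length_le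
      simpa using this
    have he1 : P.filter (fun x => decide (x < s₁)) = ((List.range s₁).reverse).take i :=
      List.prefix_iff_eq_take.1 hpre1
    have he2 : P.filter (fun x => !decide (x < s₁)) = (List.range' s₁ (s - s₁)).take j :=
      List.prefix_iff_eq_take.1 hpre2
    have hPset : P.toFinset =
        (P.filter (fun x => decide (x < s₁))).toFinset ∪
        (P.filter (fun x => !decide (x < s₁))).toFinset := by
      rw [← List.toFinset_append]
      exact (perm_toFinset (List.filter_append_perm _ P)).symm
    refine ⟨s₁ - i, ?_⟩
    rw [hPset, he1, he2, toFinset_take_revrange hi1, toFinset_take_range' hj1]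
    ext x
    simp only [Finset.mem_union, Finset.mem_Ico]
    omega

/-- For structural constants `η` satisfying the shuffle identities, with
`B_{s₁}(1,…,s) = Σ_{π ∈ Φ_{s s₁}} η(a_{π(1)},…,a_{π(s)})` summed over connected
permutations `π` with `π(1) = s₁`, one has
`B_{s₁} + B_{s₁+1} = η(a_{s₁},…,a_1)·η(a_{s₁+1},…,a_s)` for `1 ≤ s₁ ≤ s < p`. -/
theorem stmt12 (p : ℕ) (hp : p.Prime) (k : Type*) [Field k] [CharP k p]
    (η : List ℕ → k)
    (hηnil : η [] = 1) (hη1 : ∀ a : ℕ, η [a] = 1)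
    (hshuffle : ∀ l₁ l₂ : List ℕ, l₁.length + l₂.length < p →
      η l₁ * η l₂ = ((shuffles l₁ l₂).map η).sum)
    (s : ℕ) (hs0 : 0 < s) (hs : s < p) (a : Fin s → ℕ) (ha : ∀ i, 0 < a i)
    (B : ℕ → k)
    (hB : ∀ s₁ : ℕ, B s₁ = ∑ π : Equiv.Perm (Fin s),
      if ((π ⟨0, hs0⟩ : ℕ) + 1 = s₁ ∧ IsConnectedPerm π) then
        η (List.ofFn fun i => a (π i)) else 0) :
    ∀ (s₁ : ℕ) (_hs₁ : 1 ≤ s₁) (hs₁s : s₁ ≤ s),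
      B s₁ + B (s₁ + 1) =
        η (List.ofFn fun i : Fin s₁ => a ⟨s₁ - 1 - (i : ℕ), by have := i.isLt; have := hs₁s; omega⟩) *
        η (List.ofFn fun i : Fin (s - s₁) => a ⟨s₁ + (i : ℕ), by have := i.isLt; have := hs₁s; omega⟩) := by
  intro s₁ hs₁ hs₁s
  set L₁ := (List.range s₁).reverse with hL₁
  set L₂ := List.range' s₁ (s - s₁) with hL₂
  set a' : ℕ → ℕ := fun n => if h : n < s then a ⟨n, h⟩ else 0 with ha'
  set F : Equiv.Perm (Fin s) → List ℕ := fun π => List.ofFn (fun i => (π i : ℕ)) with hF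
  have hFlen : ∀ π, (F π).length = s := fun π => by simp [hF]
  have bridge : ∀ (π : Equiv.Perm (Fin s)) (l : Fin s),
      (Finset.univ.filter fun i : Fin s => i ≤ l).image (fun i => (π i : ℕ)) =
      ((F π).take ((l : ℕ) + 1)).toFinset := by
    intro π l
    ext x
    simp only [Finset.mem_image, Finset.mem_filter, Finset.mem_univ, true_and,
      List.mem_toFinset, List.mem_take_iff_getElem, List.getElem_ofFn, List.length_ofFn, hF]
    constructor
    · rintro ⟨i, hi, rfl⟩
      refine ⟨(i : ℕ), ?_, ?_⟩
      · have := i.isLt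
        have := Fin.le_def.1 hi
        omega
      · congr 1
    · rintro ⟨n, hn, rfl⟩
      have hns : n < s := by omega
      refine ⟨⟨n, hns⟩, ?_, rfl⟩
      rw [Fin.le_def]
      simp
      omega
  have connIff : ∀ π : Equiv.Perm (Fin s), IsConnectedPerm π ↔
      ∀ l, l < s → ∃ c, ((F π).take (l + 1)).toFinset = Finset.Ico c (c + l + 1) := by
    intro π
    constructor
    · intro h l hl
      obtain ⟨c, hc⟩ := h ⟨l, hl⟩
      exact ⟨c, by rw [← bridge π ⟨l, hl⟩]; exact hc⟩
    · intro h l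
      obtain ⟨c, hc⟩ := h (l : ℕ) l.isLt
      exact ⟨c, by rw [bridge π l]; exact hc⟩
  have hheadF : ∀ π : Equiv.Perm (Fin s), (F π).head? = some ((π ⟨0, hs0⟩ : ℕ)) := by
    intro π
    have h0 : 0 < (F π).length := by rw [hFlen]; omega
    rw [List.head?_eq_getElem?, List.getElem?_eq_getElem h0]
    simp [hF]
  -- the combined condition
  set Q : Equiv.Perm (Fin s) → Prop := fun π =>
    (((π ⟨0, hs0⟩ : ℕ) + 1 = s₁ ∧ IsConnectedPerm π) ∨
     ((π ⟨0, hs0⟩ : ℕ) + 1 = s₁ + 1 ∧ IsConnectedPerm π)) with hQ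
  have step1 : B s₁ + B (s₁ + 1) = ∑ π : Equiv.Perm (Fin s),
      if Q π then η (List.ofFn fun i => a (π i)) else 0 := by
    rw [hB s₁, hB (s₁ + 1), ← Finset.sum_add_distrib]
    refine Finset.sum_congr rfl fun π _ => ?_
    by_cases h₁ : ((π ⟨0, hs0⟩ : ℕ) + 1 = s₁ ∧ IsConnectedPerm π) <;>
      by_cases h₂ : ((π ⟨0, hs0⟩ : ℕ) + 1 = s₁ + 1 ∧ IsConnectedPerm π)
    · exact absurd (h₁.1.symm.trans h₂.1) (by omega)
    · rw [if_pos h₁, if_neg h₂, if_pos (show Q π from by rw [hQ]; exact Or.inl h₁), add_zero]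
    · rw [if_neg h₁, if_pos h₂, if_pos (show Q π from by rw [hQ]; exact Or.inr h₂), zero_add]
    · rw [if_neg h₁, if_neg h₂, if_neg (show ¬ Q π from by rw [hQ]; tauto), add_zero]
  rw [step1, ← Finset.sum_filter]
  set Φ := Finset.univ.filter Q with hΦ
  have step3 : ∀ π ∈ Φ, η (List.ofFn fun i => a (π i)) = η ((F π).map a') := by
    intro π _
    congr 1
    rw [hF, List.map_ofFn]
    refine List.ofFn_inj.2 (funext fun i => ?_)
    show a (π i) = a' ((π i : ℕ))
    rw [ha']
    simp only
    rw [dif_pos (π i).isLt, Fin.eta]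
  rw [Finset.sum_congr rfl step3]
  have hFinj : ∀ π₁ ∈ Φ, ∀ π₂ ∈ Φ, F π₁ = F π₂ → π₁ = π₂ := by
    intro π₁ _ π₂ _ h
    rw [hF] at h
    simp only at h
    have := List.ofFn_inj.1 h
    exact Equiv.ext fun i => Fin.val_injective (congrFun this i)
  have himgsum : ∑ l ∈ Φ.image F, η (l.map a') = ∑ π ∈ Φ, η ((F π).map a') :=
    Finset.sum_image hFinj
  rw [← himgsum]
  have hcat : (L₁ ++ L₂).Perm (List.range s) := by
    refine (List.Perm.append ((List.range s₁).reverse_perm) (List.Perm.refl _)).trans ?_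
    rw [List.range_eq_range', List.range_eq_range']
    have := List.range'_append (s := 0) (m := s₁) (n := s - s₁) (step := 1)
    simp only [one_mul, zero_add] at this
    rw [this, show s₁ + (s - s₁) = s from by omega]
  have himg : Φ.image F = (shuffles L₁ L₂).toFinset := by
    ext L
    simp only [Finset.mem_image, List.mem_toFinset]
    constructor
    · rintro ⟨π, hπ, rfl⟩
      rw [hΦ, Finset.mem_filter] at hπ
      have hQπ := hπ.2
      refine dirA s s₁ hs₁ hs₁s (F π) (hFlen π) ?_ ?_ ?_ ?_
      · rw [hF]
        exact List.nodup_ofFn.2 (Fin.val_injective.comp π.injective)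
      · ext x
        rw [List.mem_toFinset, hF, List.mem_ofFn, Finset.mem_Ico]
        constructor
        · rintro ⟨i, rfl⟩
          exact ⟨Nat.zero_le _, (π i).isLt⟩
        · rintro ⟨-, hx⟩
          exact ⟨π.symm ⟨x, hx⟩, by simp⟩
      · exact (connIff π).1 (hQπ.elim And.right And.right)
      · rcases hQπ with ⟨h0, -⟩ | ⟨h0, -⟩
        · left; rw [hheadF π]; congr 1; omega
        · right; rw [hheadF π]; congr 1; omega
    · intro hL
      obtain ⟨hperm, hhead, hconn⟩ := dirB s s₁ hs₁ hs₁s L hL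
      have hlen : L.length = s := by simpa using hperm.length_eq
      have hxlt : ∀ x ∈ L, x < s := by
        intro x hx
        have := hperm.mem_iff.1 hx
        simpa using this
      have hndL : L.Nodup := hperm.nodup_iff.2 (List.nodup_range (n := s))
      have hglt : ∀ i : Fin s, L[(i : ℕ)]'(by rw [hlen]; exact i.isLt) < s :=
        fun i => hxlt _ (List.getElem_mem _)
      set g : Fin s → Fin s := fun i => ⟨L[(i : ℕ)]'(by rw [hlen]; exact i.isLt), hglt i⟩
        with hg
      have hginj : Function.Injective g := by
        intro i j hgij
        rw [hg] at hgij
        simp only [Fin.mk.injEq] at hgij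
        exact Fin.ext ((hndL.getElem_inj_iff).1 hgij)
      set π : Equiv.Perm (Fin s) :=
        Equiv.ofBijective g ((Fintype.bijective_iff_injective_and_card g).2 ⟨hginj, rfl⟩)
        with hπdef
      have hπapp : ∀ i : Fin s, π i = g i := fun i => rfl
      have hFL : F π = L := by
        refine List.ext_getElem (by rw [hFlen, hlen]) fun n h₁ h₂ => ?_
        simp only [hF, List.getElem_ofFn]
        rfl
      have h0L : (π ⟨0, hs0⟩ : ℕ) = L[0]'(by omega) := by rw [hπapp]
      have hL0 : L.head? = some (L[0]'(by omega)) := by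
        rw [List.head?_eq_getElem?, List.getElem?_eq_getElem (by omega)]
      refine ⟨π, ?_, hFL⟩
      rw [hΦ, Finset.mem_filter]
      refine ⟨Finset.mem_univ _, ?_⟩
      have hconn' : IsConnectedPerm π := (connIff π).2 (hFL ▸ hconn)
      rw [hQ]
      rcases hhead with h | h <;> rw [hL0] at h <;>
        replace h := Option.some_injective _ h
      · left; exact ⟨by rw [h0L, h]; omega, hconn'⟩
      · right; exact ⟨by rw [h0L, h], hconn'⟩
  rw [himg, List.sum_toFinset _ (nodup_shuffles (hcat.nodup_iff.2 (List.nodup_range (n := s))))]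
  rw [show (fun l => η (List.map a' l)) = η ∘ List.map a' from rfl, ← List.map_map,
    ← shuffles_map]
  rw [← hshuffle _ _ (by simp [hL₁, hL₂]; omega)]
  congr 1
  · refine congrArg η (List.ext_getElem (by simp [hL₁]) fun n h₁ h₂ => ?_)
    have hn : n < s₁ := by simpa [hL₁] using h₁
    simp only [List.getElem_map, List.getElem_ofFn, hL₁, List.getElem_reverse,
      List.getElem_range, List.length_range, ha']
    rw [dif_pos (show s₁ - 1 - n < s by omega)]
  · refine congrArg η (List.ext_getElem (by simp [hL₂]) fun n h₁ h₂ => ?_)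
    have hn : n < s - s₁ := by simpa [hL₂] using h₁
    simp only [List.getElem_map, List.getElem_ofFn, hL₂, List.getElem_range', one_mul, ha']
    rw [dif_pos (show s₁ + n < s by omega)]
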